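/- (Inversion is an isometry of the model metric and preserves the solid cone) The inversion f is an involution of ℝⁿ\{0} (f∘f = id); it maps C_{d,h}\{0} onto C_{d,h}\{0} and ℝ^d₊\{0} onto ℝ^d₊\{0}, hence it maps C_{d,h} \ ℝ^d₊ bijectively onto itself. Moreover, for every x ∈ ℝⁿ with ρ(x) > 0 one has ρ(f(x)) = ρ(x)/|x|² > 0, f is differentiable at x, and for all v, w ∈ ℝⁿ, ρ(f(x))⁻² ⟨Df(x)v, Df(x)w⟩ = ρ(x)⁻² ⟨v, w⟩, where Df(x) is the Fréchet derivative of f at x and ⟨·,·⟩ is the Euclidean inner product; that is, f is an isometry of the Riemannian metric g = ρ⁻² δ on {ρ > 0}. -/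

import Mathlib

open MeasureTheory Set Finset RealInnerProductSpace
open scoped ENNReal NNReal

noncomputable section

/-- `ℝⁿ` with the Euclidean inner product. -/
abbrev Spc (n : ℕ) : Type := EuclideanSpace ℝ (Fin n)

/-- `ρ(x) = (x_{d+1}² + ⋯ + x_n²)^{1/2}`; in 0-indexed coordinates these are the
coordinates with index `≥ d`. -/
def rho (n d : ℕ) (x : Spc n) : ℝ :=
  Real.sqrt (∑ i ∈ Finset.univ.filter (fun i : Fin n => d ≤ (i : ℕ)), x i ^ 2)

/-- The generalized solid cone `C_{d,h} = {x ∈ ℝⁿ : x₁ ≥ h ρ(x)}`. -/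
def Cone (n d : ℕ) (hn : 0 < n) (h : ℝ) : Set (Spc n) :=
  {x | h * rho n d x ≤ x ⟨0, hn⟩}

/-- The singular set `ℝ^d₊ = {x ∈ ℝⁿ : x₁ ≥ 0, x_{d+1} = ⋯ = x_n = 0}`. -/
def Rdplus (n d : ℕ) (hn : 0 < n) : Set (Spc n) :=
  {x | 0 ≤ x ⟨0, hn⟩ ∧ ∀ i : Fin n, d ≤ (i : ℕ) → x i = 0}

/-- The inversion `f(x) = x / |x|²`. -/
def finv {n : ℕ} (x : Spc n) : Spc n := (‖x‖ ^ 2)⁻¹ • x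

lemma finv_eq_inversion {n : ℕ} : (finv (n := n)) = EuclideanGeometry.inversion (0 : Spc n) 1 := by
  funext x
  simp [finv, EuclideanGeometry.inversion, dist_eq_norm, div_pow]

lemma finv_finv {n : ℕ} (x : Spc n) : finv (finv x) = x := by
  rw [finv_eq_inversion]
  exact EuclideanGeometry.inversion_inversion 0 one_ne_zero x

lemma rho_smul (n d : ℕ) (c : ℝ) (x : Spc n) : rho n d (c • x) = |c| * rho n d x := by
  unfold rho
  rw [← Real.sqrt_sq_eq_abs, ← Real.sqrt_mul (sq_nonneg c), Finset.mul_sum]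
  congr 1
  refine Finset.sum_congr rfl fun i _ => ?_
  simp [mul_pow]

lemma rho_nonneg (n d : ℕ) (x : Spc n) : 0 ≤ rho n d x := Real.sqrt_nonneg _

lemma ne_zero_of_rho_pos {n d : ℕ} {x : Spc n} (hx : 0 < rho n d x) : x ≠ 0 := by
  rintro rfl
  simp [rho] at hx

lemma finv_apply {n : ℕ} (x : Spc n) (i : Fin n) : finv x i = (‖x‖ ^ 2)⁻¹ * x i := by
  simp [finv]

lemma normsq_inv_pos {n : ℕ} {x : Spc n} (hx : x ≠ 0) : 0 < (‖x‖ ^ 2)⁻¹ := by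
  have h : ‖x‖ ≠ 0 := norm_ne_zero_iff.2 hx
  positivity

lemma finv_ne_zero {n : ℕ} {x : Spc n} (hx : x ≠ 0) : finv x ≠ 0 := by
  intro h0
  have := finv_finv x
  rw [h0] at this
  simp [finv] at this
  exact hx this.symm

lemma rho_finv (n d : ℕ) (x : Spc n) : rho n d (finv x) = (‖x‖ ^ 2)⁻¹ * rho n d x := by
  rw [finv, rho_smul, abs_of_nonneg (by positivity)]

lemma mapsTo_cone {n d : ℕ} (hn : 0 < n) (h : ℝ) {x : Spc n} (hx : x ≠ 0)
    (hxC : x ∈ Cone n d hn h) : finv x ∈ Cone n d hn h := by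
  have hc := normsq_inv_pos hx
  simp only [Cone, Set.mem_setOf_eq] at hxC ⊢
  rw [rho_finv, finv_apply, ← mul_assoc, mul_comm h, mul_assoc]
  exact mul_le_mul_of_nonneg_left hxC hc.le

lemma mapsTo_rdplus {n d : ℕ} (hn : 0 < n) {x : Spc n}
    (hxC : x ∈ Rdplus n d hn) : finv x ∈ Rdplus n d hn := by
  obtain ⟨h0, hz⟩ := hxC
  refine ⟨?_, fun i hi => ?_⟩
  · rw [finv_apply]; positivity
  · rw [finv_apply, hz i hi, mul_zero]

lemma image_eq_self {n : ℕ} {S : Set (Spc n)} (hmap : ∀ x ∈ S, finv x ∈ S) : finv '' S = S := by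
  apply Set.Subset.antisymm
  · rintro _ ⟨x, hx, rfl⟩; exact hmap x hx
  · intro x hx
    exact ⟨finv x, hmap x hx, finv_finv x⟩

lemma hasFDerivAt_finv {n : ℕ} {x : Spc n} (hx : x ≠ 0) :
    HasFDerivAt (finv (n := n))
      (((1 : ℝ) / ‖x‖) ^ 2 • (((ℝ ∙ x)ᗮ.reflection : Spc n →L[ℝ] Spc n))) x := by
  rw [finv_eq_inversion]
  simpa [dist_eq_norm] using
    EuclideanGeometry.hasFDerivAt_inversion (c := (0 : Spc n)) (R := (1 : ℝ)) (x := x) hx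

lemma inner_fderiv_finv {n : ℕ} {x : Spc n} (hx : x ≠ 0) (v w : Spc n) :
    ⟪fderiv ℝ (finv (n := n)) x v, fderiv ℝ (finv (n := n)) x w⟫ =
      (‖x‖ ^ 2 * ‖x‖ ^ 2)⁻¹ * ⟪v, w⟫ := by
  rw [(hasFDerivAt_finv hx).fderiv]
  simp only [ContinuousLinearMap.smul_apply]
  rw [real_inner_smul_left, real_inner_smul_right]
  have : (((ℝ ∙ x)ᗮ.reflection : Spc n →L[ℝ] Spc n) v) = (ℝ ∙ x)ᗮ.reflection v := rfl
  rw [this, show (((ℝ ∙ x)ᗮ.reflection : Spc n →L[ℝ] Spc n) w) = (ℝ ∙ x)ᗮ.reflection w from rfl,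
    LinearIsometryEquiv.inner_map_map]
  have hnx : ‖x‖ ≠ 0 := norm_ne_zero_iff.2 hx
  field_simp

lemma zero_mem_rdplus {n d : ℕ} (hn : 0 < n) : (0 : Spc n) ∈ Rdplus n d hn := by
  constructor <;> simp [Rdplus]


/-- the inversion is an involution of `ℝⁿ \ {0}`, preserves the solid cone
minus the origin and the singular half-subspace minus the origin (hence maps
`C_{d,h} \ ℝ^d₊` bijectively onto itself), and on `{ρ > 0}` it satisfies
`ρ(f(x)) = ρ(x)/|x|² > 0`, is differentiable, and is an isometry of the metric
`g = ρ⁻² δ`. -/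
theorem inversion_isometry_of_model_metric
    (n d : ℕ) (hn : 2 ≤ n) (hd : d ≤ n - 1) (h : ℝ) (hh : 0 < h) :
    (∀ x : Spc n, x ≠ 0 → finv (finv x) = x) ∧
    finv '' (Cone n d (by omega) h \ {0}) = Cone n d (by omega) h \ {0} ∧
    finv '' (Rdplus n d (by omega) \ {0}) = Rdplus n d (by omega) \ {0} ∧
    Set.BijOn finv (Cone n d (by omega) h \ Rdplus n d (by omega))
      (Cone n d (by omega) h \ Rdplus n d (by omega)) ∧
    (∀ x : Spc n, 0 < rho n d x →
      rho n d (finv x) = rho n d x / ‖x‖ ^ 2 ∧ 0 < rho n d (finv x) ∧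
      DifferentiableAt ℝ (finv (n := n)) x ∧
      ∀ v w : Spc n,
        (rho n d (finv x) ^ 2)⁻¹ *
            ⟪fderiv ℝ (finv (n := n)) x v, fderiv ℝ (finv (n := n)) x w⟫ =
          (rho n d x ^ 2)⁻¹ * ⟪v, w⟫) := by
  have hn0 : 0 < n := by omega
  refine ⟨fun x _ => finv_finv x, ?_, ?_, ?_, ?_⟩
  · apply image_eq_self
    rintro x ⟨hxC, hx0⟩
    have hx : x ≠ 0 := by simpa using hx0
    exact ⟨mapsTo_cone _ h hx hxC, by simpa using finv_ne_zero hx⟩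
  · apply image_eq_self
    rintro x ⟨hxC, hx0⟩
    have hx : x ≠ 0 := by simpa using hx0
    exact ⟨mapsTo_rdplus _ hxC, by simpa using finv_ne_zero hx⟩
  · have hne : ∀ x : Spc n, x ∈ Cone n d hn0 h \ Rdplus n d hn0 → x ≠ 0 := by
      rintro x ⟨_, hxR⟩ rfl
      exact hxR (zero_mem_rdplus hn0)
    have hmap : Set.MapsTo finv (Cone n d hn0 h \ Rdplus n d hn0)
        (Cone n d hn0 h \ Rdplus n d hn0) := by
      rintro x hx
      have hx0 := hne x hx
      refine ⟨mapsTo_cone _ h hx0 hx.1, fun hR => ?_⟩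
      have := mapsTo_rdplus hn0 hR
      rw [finv_finv] at this
      exact hx.2 this
    refine ⟨hmap, fun a _ b _ hab => ?_, fun y hy => ?_⟩
    · have := congrArg finv hab
      rwa [finv_finv, finv_finv] at this
    · exact ⟨finv y, hmap hy, finv_finv y⟩
  · intro x hρ
    have hx : x ≠ 0 := ne_zero_of_rho_pos hρ
    have hnx : ‖x‖ ≠ 0 := norm_ne_zero_iff.2 hx
    have hρf : rho n d (finv x) = rho n d x / ‖x‖ ^ 2 := by
      rw [rho_finv, div_eq_inv_mul]
    refine ⟨hρf, ?_, (hasFDerivAt_finv hx).differentiableAt, fun v w => ?_⟩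
    · rw [hρf]; positivity
    · rw [inner_fderiv_finv hx, hρf]
      have hρ0 : rho n d x ≠ 0 := ne_of_gt hρ
      field_simp
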